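/- arXiv:2509.04144 — 3 statements merged into one kernel-verified Lean document; each statement's English description precedes it below -/
import Mathlib

section
/- The smallest real root μ_min of the polynomial p(μ) satisfies 0 ≤ μ_min ≤ min(λ_1, q_0), where λ_1 = min_i λ_i. -/
/-- The polynomial `p` from Theorem 1 of the paper. -/
noncomputable def pPoly (m : ℕ) (lam q : Fin m → ℝ) (q0 : ℝ) (μ : ℝ) : ℝ :=
  (μ - (q0 + ∑ i, q i)) * ∏ i, (μ - lam i) -
    ∑ i, lam i * q i * ∏ j ∈ Finset.univ.erase i, (μ - lam j)

open Finset

lemma prod_flip_aux (m : ℕ) (lam : Fin m → ℝ) (s : Finset (Fin m)) (x : ℝ) :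
    ∏ j ∈ s, (x - lam j) = (-1 : ℝ) ^ s.card * ∏ j ∈ s, (lam j - x) := by
  rw [← prod_const (-1 : ℝ), ← prod_mul_distrib]
  exact prod_congr rfl fun j _ => by ring

lemma pPoly_eq (m : ℕ) (lam q : Fin m → ℝ) (q0 x : ℝ) :
    pPoly m lam q q0 x =
      (x - q0) * ∏ i, (x - lam i) -
        x * ∑ i, q i * ∏ j ∈ Finset.univ.erase i, (x - lam j) := by
  have h1 : ∀ i : Fin m, (x - lam i) * ∏ j ∈ Finset.univ.erase i, (x - lam j)
      = ∏ j, (x - lam j) := fun i => mul_prod_erase univ (fun j => x - lam j) (mem_univ i)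
  unfold pPoly
  calc (x - (q0 + ∑ i, q i)) * ∏ i, (x - lam i) -
        ∑ i, lam i * q i * ∏ j ∈ Finset.univ.erase i, (x - lam j)
      = (x - q0) * ∏ i, (x - lam i) -
          ((∑ i, q i * ∏ j, (x - lam j)) +
            ∑ i, lam i * q i * ∏ j ∈ Finset.univ.erase i, (x - lam j)) := by
        rw [← sum_mul]; ring
    _ = (x - q0) * ∏ i, (x - lam i) -
          ∑ i, (q i * ∏ j, (x - lam j) +
            lam i * q i * ∏ j ∈ Finset.univ.erase i, (x - lam j)) := by
        rw [sum_add_distrib]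
    _ = (x - q0) * ∏ i, (x - lam i) -
          ∑ i, x * (q i * ∏ j ∈ Finset.univ.erase i, (x - lam j)) := by
        congr 1
        refine sum_congr rfl fun i _ => ?_
        rw [← h1 i]; ring
    _ = _ := by rw [← mul_sum]

lemma pPoly_flip (m : ℕ) (hm : 0 < m) (lam q : Fin m → ℝ) (q0 x : ℝ) :
    (-1 : ℝ) ^ (m + 1) * pPoly m lam q q0 x =
      (q0 - x) * ∏ i, (lam i - x) +
        (-x) * ∑ i, q i * ∏ j ∈ Finset.univ.erase i, (lam j - x) := by
  rw [pPoly_eq]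
  have hT : ∏ i, (x - lam i) = (-1 : ℝ) ^ m * ∏ i, (lam i - x) := by
    rw [prod_flip_aux]
    congr 2
    simp
  have hS : ∑ i, q i * ∏ j ∈ Finset.univ.erase i, (x - lam j)
      = (-1 : ℝ) ^ (m - 1) * ∑ i, q i * ∏ j ∈ Finset.univ.erase i, (lam j - x) := by
    rw [mul_sum]
    refine sum_congr rfl fun i _ => ?_
    rw [prod_flip_aux]
    have hc : (Finset.univ.erase i).card = m - 1 := by
      rw [card_erase_of_mem (mem_univ i), card_univ, Fintype.card_fin]
    rw [hc]; ring
  rw [hT, hS]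
  have e1 : (-1 : ℝ) ^ (m + 1) * (-1) ^ m = -1 := by
    rw [← pow_add]
    have h : m + 1 + m = 2 * m + 1 := by ring
    rw [h, pow_succ, pow_mul]; norm_num
  have e2 : (-1 : ℝ) ^ (m + 1) * (-1) ^ (m - 1) = 1 := by
    rw [← pow_add]
    have h : m + 1 + (m - 1) = 2 * m := by omega
    rw [h, pow_mul]; norm_num
  linear_combination ((x - q0) * ∏ i, (lam i - x)) * e1 -
    (x * ∑ i, q i * ∏ j ∈ Finset.univ.erase i, (lam j - x)) * e2

lemma pPoly_continuous (m : ℕ) (lam q : Fin m → ℝ) (q0 : ℝ) :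
    Continuous fun x => pPoly m lam q q0 x := by
  unfold pPoly
  apply Continuous.sub
  · exact ((continuous_id.sub continuous_const).mul
      (continuous_finset_prod _ fun i _ => continuous_id.sub continuous_const))
  · exact continuous_finset_sum _ fun i _ => (continuous_const.mul
      (continuous_finset_prod _ fun j _ => continuous_id.sub continuous_const))

/-- The smallest real root `μ_min` of `p` satisfies `0 ≤ μ_min ≤ min(λ₁, q₀)`. -/
theorem mu_min_bounds (m : ℕ) (hm : 0 < m) (lam q : Fin m → ℝ) (q0 : ℝ)
    (hlam : ∀ i, 0 < lam i) (hsorted : Monotone lam)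
    (hq : ∀ i, 0 < q i) (hq0 : 0 < q0)
    (μmin : ℝ) (hroot : pPoly m lam q q0 μmin = 0)
    (hsmallest : ∀ x : ℝ, pPoly m lam q q0 x = 0 → μmin ≤ x) :
    0 ≤ μmin ∧ μmin ≤ min (lam ⟨0, hm⟩) q0 := by
  set f : ℝ → ℝ := fun x => (-1 : ℝ) ^ (m + 1) * pPoly m lam q q0 x with hf
  -- positivity of f on x ≤ 0
  have hpos : ∀ x : ℝ, x ≤ 0 → 0 < f x := by
    intro x hx
    rw [hf]
    simp only []
    rw [pPoly_flip m hm]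
    have hT : 0 < ∏ i, (lam i - x) :=
      prod_pos fun i _ => by linarith [hlam i]
    have hS : 0 ≤ ∑ i, q i * ∏ j ∈ Finset.univ.erase i, (lam j - x) :=
      sum_nonneg fun i _ => mul_nonneg (hq i).le
        (prod_nonneg fun j _ => by linarith [hlam j])
    have h1 : 0 < (q0 - x) * ∏ i, (lam i - x) := mul_pos (by linarith) hT
    have h2 : 0 ≤ (-x) * ∑ i, q i * ∏ j ∈ Finset.univ.erase i, (lam j - x) :=
      mul_nonneg (by linarith) hS
    linarith
  set c : ℝ := min (lam ⟨0, hm⟩) q0 with hc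
  have hc0 : 0 < c := lt_min (hlam _) hq0
  have hcle : ∀ i, c ≤ lam i := fun i =>
    le_trans (min_le_left _ _) (hsorted (show (⟨0, hm⟩ : Fin m) ≤ i from Fin.mk_le_of_le_val (Nat.zero_le _)))
  have hfc : f c ≤ 0 := by
    rw [hf]
    simp only []
    rw [pPoly_flip m hm]
    have hS : 0 ≤ ∑ i, q i * ∏ j ∈ Finset.univ.erase i, (lam j - c) :=
      sum_nonneg fun i _ => mul_nonneg (hq i).le
        (prod_nonneg fun j _ => by linarith [hcle j])
    have hfirst : (q0 - c) * ∏ i, (lam i - c) = 0 := by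
      rcases min_cases (lam ⟨0, hm⟩) q0 with ⟨h, _⟩ | ⟨h, _⟩
      · have hz : ∏ i, (lam i - c) = 0 :=
          prod_eq_zero (mem_univ (⟨0, hm⟩ : Fin m)) (by rw [hc, h]; ring)
        rw [hz, mul_zero]
      · have hz : q0 - c = 0 := by rw [hc, h]; ring
        rw [hz, zero_mul]
    rw [hfirst, zero_add]
    have := mul_nonneg hc0.le hS
    nlinarith
  -- existence of a root in [0, c]
  have hcont : ContinuousOn f (Set.Icc 0 c) :=
    (continuous_const.mul (pPoly_continuous m lam q q0)).continuousOn
  have hmem : (0 : ℝ) ∈ Set.Icc (f c) (f 0) := ⟨hfc, (hpos 0 le_rfl).le⟩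
  obtain ⟨y, hy, hfy⟩ := intermediate_value_Icc' hc0.le hcont hmem
  have hpy : pPoly m lam q q0 y = 0 := by
    have hne : ((-1 : ℝ) ^ (m + 1)) ≠ 0 := by positivity
    have := hfy
    rw [hf] at this
    simp only [] at this
    exact (mul_eq_zero.mp this).resolve_left hne
  constructor
  · by_contra hneg
    push_neg at hneg
    have h0 : 0 < f μmin := hpos μmin hneg.le
    rw [hf] at h0
    simp only [hroot, mul_zero] at h0
    exact lt_irrefl 0 h0
  · exact le_trans (hsmallest y hpy) hy.2
end

section
/- Consequently, Σ_{i=0}^m q_i - μ_min ≤ Σ_{i=0}^m q_i - μ_- = (1/2)·(Σ_{i=0}^m q_i - λ_1 + √((Σ_{i=0}^m q_i + λ_1)² - 4 q_0 λ_1)), with equality if and only if all λ_i are equal to λ_1. -/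
set_option maxHeartbeats 1000000


lemma pPoly_factor (m : ℕ) (lam q : Fin m → ℝ) (q0 x : ℝ) (hx : ∀ i, x ≠ lam i) :
    pPoly m lam q q0 x =
      (∏ i, (x - lam i)) * ((x - (q0 + ∑ i, q i)) - ∑ i, lam i * q i / (x - lam i)) := by
  have hne : ∀ i : Fin m, x - lam i ≠ 0 := fun i => sub_ne_zero.2 (hx i)
  unfold pPoly
  rw [mul_sub, Finset.mul_sum]
  congr 1
  · ring
  · refine Finset.sum_congr rfl fun i _ => ?_
    rw [← Finset.mul_prod_erase Finset.univ (fun j => x - lam j) (Finset.mem_univ i)]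
    field_simp [hne i]

/-- `∑ᵢ qᵢ - μ_min ≤ ∑ᵢ qᵢ - μ₋ = (∑ᵢ qᵢ - λ₁ + √((∑ᵢ qᵢ + λ₁)² - 4 q₀ λ₁))/2`,
with equality iff all `λᵢ = λ₁`. -/
theorem lr_le_bound (m : ℕ) (hm : 0 < m) (lam q : Fin m → ℝ) (q0 : ℝ)
    (hlam1 : 0 < lam ⟨0, hm⟩) (hsorted : Monotone lam)
    (hq : ∀ i, 0 < q i) (hq0 : 0 < q0)
    (μmin : ℝ) (hroot : pPoly m lam q q0 μmin = 0)
    (hsmallest : ∀ x : ℝ, pPoly m lam q q0 x = 0 → μmin ≤ x)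
    (μminus : ℝ)
    (hμminus : μminus = (1 / 2) * (lam ⟨0, hm⟩ + (q0 + ∑ i, q i) -
      Real.sqrt ((lam ⟨0, hm⟩ + (q0 + ∑ i, q i)) ^ 2 - 4 * lam ⟨0, hm⟩ * q0))) :
    (q0 + ∑ i, q i) - μmin ≤ (q0 + ∑ i, q i) - μminus ∧
    (q0 + ∑ i, q i) - μminus = (1 / 2) * ((q0 + ∑ i, q i) - lam ⟨0, hm⟩ +
      Real.sqrt (((q0 + ∑ i, q i) + lam ⟨0, hm⟩) ^ 2 - 4 * q0 * lam ⟨0, hm⟩)) ∧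
    ((q0 + ∑ i, q i) - μmin = (q0 + ∑ i, q i) - μminus ↔
      ∀ i, lam i = lam ⟨0, hm⟩) := by
  set L : ℝ := lam ⟨0, hm⟩ with hLdef
  set Q : ℝ := ∑ i, q i with hQdef
  have hQpos : 0 < Q := by
    refine Finset.sum_pos (fun i _ => hq i) ?_
    exact ⟨⟨0, hm⟩, Finset.mem_univ _⟩
  set S : ℝ := q0 + Q with hSdef
  have hSq0 : q0 < S := by simp [hSdef]; linarith
  have hSpos : 0 < S := lt_trans hq0 hSq0
  set s : ℝ := Real.sqrt ((L + S) ^ 2 - 4 * L * q0) with hsdef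
  have hD : (0:ℝ) < (L + S) ^ 2 - 4 * L * q0 := by
    nlinarith [sq_nonneg (L - S), mul_pos hlam1 (sub_pos.2 hSq0)]
  have hs2 : s ^ 2 = (L + S) ^ 2 - 4 * L * q0 := Real.sq_sqrt hD.le
  have hsnonneg : 0 ≤ s := Real.sqrt_nonneg _
  have hspos : 0 < s := by nlinarith
  have hμm : μminus = (1 / 2) * (L + S - s) := hμminus
  -- μminus is a root of the quadratic g
  have hg : μminus ^ 2 - (L + S) * μminus + L * q0 = 0 := by
    rw [hμm]; nlinarith [hs2]
  have hμpos : 0 < μminus := by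
    rw [hμm]
    have hslt : s < L + S := by nlinarith
    linarith
  have hμltL : μminus < L := by
    have : S - L < s := by nlinarith
    rw [hμm]; linarith
  have hLle : ∀ i, L ≤ lam i := fun i => hsorted (by simp [Fin.le_def])
  have hμlt : ∀ i, μminus < lam i := fun i => lt_of_lt_of_le hμltL (hLle i)
  -- g is positive to the left of μminus
  have hgpos : ∀ x : ℝ, x < μminus → 0 < x ^ 2 - (L + S) * x + L * q0 := by
    intro x hx
    have h1 : 0 < L + S - 2 * x - s := by rw [hμm] at hx; linarith
    have h2 : 0 < L + S - 2 * x + s := by linarith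
    nlinarith [mul_pos h1 h2]
  -- f is negative to the left of μminus
  have hfneg : ∀ x : ℝ, x < μminus →
      (x - S) - ∑ i, lam i * q i / (x - lam i) < 0 := by
    intro x hx
    have hxlt : ∀ i, x < lam i := fun i => lt_trans hx (hμlt i)
    rcases le_or_gt x 0 with hx0 | hx0
    · -- each term lam i * q i / (x - lam i) ≥ -q i
      have hterm : ∀ i ∈ Finset.univ, -(q i) ≤ lam i * q i / (x - lam i) := by
        intro i _
        have hd : x - lam i < 0 := sub_neg.2 (hxlt i)
        rw [le_div_iff_of_neg hd]
        have hLi : 0 < lam i := lt_of_lt_of_le hlam1 (hLle i)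
        nlinarith [hq i]
      have hsum : -(∑ i : Fin m, q i) ≤ ∑ i, lam i * q i / (x - lam i) := by
        rw [← Finset.sum_neg_distrib]; exact Finset.sum_le_sum hterm
      rw [← hQdef] at hsum
      linarith
    · -- compare termwise with the quadratic case
      have hterm : ∀ i ∈ Finset.univ, L * q i / (x - L) ≤ lam i * q i / (x - lam i) := by
        intro i _
        have hdL : 0 < L - x := by linarith [lt_trans hx hμltL]
        have hdi : 0 < lam i - x := by linarith [hxlt i]
        have h1 : lam i * q i / (x - lam i) = -(lam i * q i / (lam i - x)) := by
          rw [← div_neg, neg_sub]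
        have h2 : L * q i / (x - L) = -(L * q i / (L - x)) := by
          rw [← div_neg, neg_sub]
        rw [h1, h2, neg_le_neg_iff, div_le_div_iff₀ hdi hdL]
        have := hLle i
        nlinarith [mul_nonneg (mul_nonneg (hq i).le hx0.le) (sub_nonneg.2 this)]
      have hsum := Finset.sum_le_sum hterm
      have hsumL : ∑ i : Fin m, L * q i / (x - L) = L * Q / (x - L) := by
        rw [← Finset.sum_div, ← Finset.mul_sum]
      rw [hsumL] at hsum
      have hdL : x - L < 0 := by linarith [lt_trans hx hμltL]
      have hgx := hgpos x hx
      have hh : (x - S) - L * Q / (x - L) < 0 := by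
        rw [sub_neg, lt_div_iff_of_neg hdL]
        have hSQ : L * S - L * Q = L * q0 := by rw [hSdef]; ring
        nlinarith
      linarith
  have hprod_ne : ∀ x : ℝ, x < μminus → (∏ i, (x - lam i)) ≠ 0 := by
    intro x hx
    refine Finset.prod_ne_zero_iff.2 fun i _ => ?_
    exact sub_ne_zero.2 (ne_of_lt (by linarith [hμlt i]))
  have hp_ne : ∀ x : ℝ, x < μminus → pPoly m lam q q0 x ≠ 0 := by
    intro x hx
    rw [pPoly_factor m lam q q0 x (fun i => ne_of_lt (lt_trans hx (hμlt i)))]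
    exact mul_ne_zero (hprod_ne x hx) (ne_of_lt (hfneg x hx))
  -- part 1: μminus ≤ μmin
  have hle : μminus ≤ μmin := by
    by_contra h
    exact hp_ne μmin (lt_of_not_ge h) hroot
  refine ⟨by linarith, ?_, ?_⟩
  · -- algebraic identity
    have hrw : ((q0 + ∑ i, q i) + L) ^ 2 - 4 * q0 * L = (L + S) ^ 2 - 4 * L * q0 := by
      rw [hSdef, hQdef]; ring
    rw [hrw, ← hsdef, hμm]
    rw [hSdef, hQdef]; ring
  · constructor
    · -- equality implies all lam i = L
      intro h
      have hμeq : μmin = μminus := by linarith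
      have hp0 : pPoly m lam q q0 μminus = 0 := hμeq ▸ hroot
      rw [pPoly_factor m lam q q0 μminus (fun i => ne_of_lt (hμlt i))] at hp0
      have hprodne : (∏ i, (μminus - lam i)) ≠ 0 :=
        Finset.prod_ne_zero_iff.2 fun i _ => sub_ne_zero.2 (ne_of_lt (hμlt i))
      have hf0 : (μminus - S) - ∑ i, lam i * q i / (μminus - lam i) = 0 := by
        rcases mul_eq_zero.1 hp0 with h' | h'
        · exact absurd h' hprodne
        · have e : (q0 + ∑ i, q i) = S := by rw [hSdef, hQdef]
          rw [e] at h'; exact h'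
      -- termwise nonneg differences summing to zero
      have hdL : μminus - L < 0 := by linarith
      have hhsum : ∑ i : Fin m, L * q i / (μminus - L) = L * Q / (μminus - L) := by
        rw [← Finset.sum_div, ← Finset.mul_sum]
      have hh0 : (μminus - S) - L * Q / (μminus - L) = 0 := by
        rw [sub_eq_zero, eq_div_iff (ne_of_lt hdL)]
        have hSQ : L * S - L * Q = L * q0 := by rw [hSdef]; ring
        nlinarith
      have hsum0 : ∑ i : Fin m,
          (lam i * q i / (μminus - lam i) - L * q i / (μminus - L)) = 0 := by
        rw [Finset.sum_sub_distrib, hhsum]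
        have e1 : ∑ i, lam i * q i / (μminus - lam i) = μminus - S := by linarith
        rw [e1]; linarith
      have hnonneg : ∀ i ∈ Finset.univ,
          (0:ℝ) ≤ lam i * q i / (μminus - lam i) - L * q i / (μminus - L) := by
        intro i _
        have hdL' : 0 < L - μminus := by linarith
        have hdi : 0 < lam i - μminus := by linarith [hμlt i]
        have h1 : lam i * q i / (μminus - lam i) = -(lam i * q i / (lam i - μminus)) := by
          rw [← div_neg, neg_sub]
        have h2 : L * q i / (μminus - L) = -(L * q i / (L - μminus)) := by
          rw [← div_neg, neg_sub]
        rw [h1, h2, sub_nonneg, neg_le_neg_iff, div_le_div_iff₀ hdi hdL']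
        have := hLle i
        nlinarith [mul_nonneg (mul_nonneg (hq i).le hμpos.le) (sub_nonneg.2 this)]
      have heach := (Finset.sum_eq_zero_iff_of_nonneg hnonneg).1 hsum0
      intro i
      have hi := heach i (Finset.mem_univ i)
      have hdL' : μminus - L ≠ 0 := ne_of_lt hdL
      have hdi : μminus - lam i ≠ 0 := ne_of_lt (by linarith [hμlt i])
      have hcross : lam i * q i * (μminus - L) = L * q i * (μminus - lam i) := by
        have h := sub_eq_zero.1 hi
        rwa [div_eq_div_iff hdi hdL'] at h
      have h0 : (lam i - L) * (q i * μminus) = 0 := by linear_combination hcross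
      rcases mul_eq_zero.1 h0 with h1 | h1
      · have : lam i = L := by linarith [sub_eq_zero.1 h1]
        exact this
      · exact absurd h1 (ne_of_gt (mul_pos (hq i) hμpos))
    · -- all lam i = L implies equality
      intro hconst
      have hne : ∀ i, μminus ≠ lam i := fun i => ne_of_lt (hμlt i)
      have hp0 : pPoly m lam q q0 μminus = 0 := by
        rw [pPoly_factor m lam q q0 μminus hne]
        have hsumc : ∑ i, lam i * q i / (μminus - lam i) = L * Q / (μminus - L) := by
          rw [hQdef, Finset.mul_sum, Finset.sum_div]
          exact Finset.sum_congr rfl fun i _ => by rw [hconst i]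
        have hdL : μminus - L < 0 := by linarith
        have : (μminus - (q0 + ∑ i, q i)) - ∑ i, lam i * q i / (μminus - lam i) = 0 := by
          rw [hsumc]
          rw [sub_eq_zero, eq_div_iff (ne_of_lt hdL)]
          have hSQ : L * S - L * Q = L * q0 := by rw [hSdef]; ring
          have : (q0 + ∑ i, q i) = S := by rw [hSdef, hQdef]
          rw [this]
          nlinarith
        rw [this, mul_zero]
      have := hsmallest μminus hp0
      have : μmin = μminus := le_antisymm this hle
      linarith
end

section
/- Let λ_1 < λ_2 ≤ ... ≤ λ_m with all λ_i, q_i > 0, and suppose λ_j > λ_1 for some j. Then the smallest root μ_min of p is strictly less than λ_1, and p has exactly one root in the interval [0, λ_1). -/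
/-- If some `λⱼ > λ₁`, the smallest root `μ_min` of `p` is strictly less than `λ₁`, and
`p` has exactly one root in `[0, λ₁)`. -/
theorem mu_min_lt_lam1 (m : ℕ) (hm : 0 < m) (lam q : Fin m → ℝ) (q0 : ℝ)
    (hlam1 : 0 < lam ⟨0, hm⟩) (hsorted : Monotone lam)
    (hq : ∀ i, 0 < q i) (hq0 : 0 < q0)
    (hstrict : ∃ j, lam ⟨0, hm⟩ < lam j)
    (μmin : ℝ) (hroot : pPoly m lam q q0 μmin = 0)
    (hsmallest : ∀ x : ℝ, pPoly m lam q q0 x = 0 → μmin ≤ x) :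
    μmin < lam ⟨0, hm⟩ ∧
    ∃! μ : ℝ, μ ∈ Set.Ico 0 (lam ⟨0, hm⟩) ∧ pPoly m lam q q0 μ = 0 := by
  set i0 : Fin m := ⟨0, hm⟩ with hi0
  set L : ℝ := lam i0 with hLdef
  have hle : ∀ i, L ≤ lam i := fun i => hsorted (Fin.le_def.mpr (Nat.zero_le _))
  have hpos : ∀ i, 0 < lam i := fun i => lt_of_lt_of_le hlam1 (hle i)
  set S : ℝ := ∑ i, q i with hS
  have hSpos : 0 < S := Finset.sum_pos (fun i _ => hq i) ⟨i0, Finset.mem_univ _⟩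
  set g : ℝ → ℝ := fun μ => μ - q0 - S + ∑ i, q i * lam i / (lam i - μ) with hg
  -- the key identity
  have hid : ∀ μ : ℝ, (∀ i, μ < lam i) →
      pPoly m lam q q0 μ = g μ * ∏ i, (μ - lam i) := by
    intro μ hμ
    have hne : ∀ i : Fin m, lam i - μ ≠ 0 := fun i => sub_ne_zero.mpr (hμ i).ne'
    simp only [pPoly, hg, hS]
    rw [add_mul, Finset.sum_mul]
    have hterm : ∀ i ∈ Finset.univ, q i * lam i / (lam i - μ) * ∏ j, (μ - lam j)
        = -(lam i * q i * ∏ j ∈ Finset.univ.erase i, (μ - lam j)) := by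
      intro i _
      rw [← Finset.mul_prod_erase Finset.univ _ (Finset.mem_univ i)]
      have h1 : (μ - lam i) / (lam i - μ) = -1 := by
        rw [div_eq_iff (hne i)]; ring
      calc q i * lam i / (lam i - μ) * ((μ - lam i) * ∏ j ∈ Finset.univ.erase i, (μ - lam j))
          = q i * lam i * ((μ - lam i) / (lam i - μ)) *
            ∏ j ∈ Finset.univ.erase i, (μ - lam j) := by ring
        _ = -(lam i * q i * ∏ j ∈ Finset.univ.erase i, (μ - lam j)) := by rw [h1]; ring
    rw [Finset.sum_congr rfl hterm, Finset.sum_neg_distrib]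
    ring
  -- on [0, L) roots of p coincide with roots of g
  have hlt : ∀ μ : ℝ, μ < L → ∀ i, μ < lam i := fun μ h i => lt_of_lt_of_le h (hle i)
  have hprod_ne : ∀ μ : ℝ, μ < L → (∏ i, (μ - lam i)) ≠ 0 := by
    intro μ h
    exact Finset.prod_ne_zero_iff.mpr fun i _ => sub_ne_zero.mpr (hlt μ h i).ne
  have hroot_iff : ∀ μ : ℝ, μ < L → (pPoly m lam q q0 μ = 0 ↔ g μ = 0) := by
    intro μ h
    rw [hid μ (hlt μ h)]
    rw [mul_eq_zero]
    exact ⟨fun h' => h'.resolve_right (hprod_ne μ h), Or.inl⟩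
  -- g is strictly increasing on (-∞, L)
  have hmono : ∀ x y : ℝ, x < L → y < L → x < y → g x < g y := by
    intro x y hx hy hxy
    simp only [hg]
    have hsum : (∑ i, q i * lam i / (lam i - x)) ≤ ∑ i, q i * lam i / (lam i - y) := by
      apply Finset.sum_le_sum
      intro i _
      have h1 : 0 < lam i - y := sub_pos.mpr (hlt y hy i)
      have h2 : lam i - y ≤ lam i - x := by linarith
      exact div_le_div_of_nonneg_left (le_of_lt (mul_pos (hq i) (hpos i))) h1 h2
    linarith
  -- g 0 = -q0 < 0
  have hg0 : g 0 = -q0 := by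
    simp only [hg, sub_zero]
    have : (∑ i, q i * lam i / lam i) = S := by
      rw [hS]
      exact Finset.sum_congr rfl fun i _ => mul_div_cancel_right₀ _ (hpos i).ne'
    rw [this]; ring
  -- choose b < L with g b > 0
  set C : ℝ := q0 + S with hC
  have hCpos : 0 < C + 1 := by positivity
  set δ : ℝ := min (L / 2) (q i0 * L / (C + 1)) with hδ
  have hδpos : 0 < δ := lt_min (half_pos hlam1) (div_pos (mul_pos (hq i0) hlam1) hCpos)
  set b : ℝ := L - δ with hb
  have hbL : b < L := by simp only [hb]; linarith
  have hb0 : 0 ≤ b := by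
    have : δ ≤ L / 2 := min_le_left _ _
    simp only [hb]; linarith
  have hgb : 0 < g b := by
    have hsum_ge : q i0 * L / (L - b) ≤ ∑ i, q i * lam i / (lam i - b) := by
      have := Finset.single_le_sum (f := fun i => q i * lam i / (lam i - b))
        (fun i _ => by
          have h1 : 0 < lam i - b := sub_pos.mpr (hlt b hbL i)
          exact div_nonneg (le_of_lt (mul_pos (hq i) (hpos i))) h1.le) (Finset.mem_univ i0)
      simpa [← hLdef] using this
    have hLb : L - b = δ := by simp only [hb]; ring
    have hbig : C + 1 ≤ q i0 * L / (L - b) := by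
      rw [hLb, le_div_iff₀ hδpos]
      have h2 : δ ≤ q i0 * L / (C + 1) := min_le_right _ _
      rw [le_div_iff₀ hCpos] at h2
      linarith
    simp only [hg, hC] at *
    linarith
  -- continuity of g on [0, b]
  have hcont : ContinuousOn g (Set.Icc 0 b) := by
    apply ContinuousOn.add
    · exact ((continuous_id.sub continuous_const).sub continuous_const).continuousOn
    · apply continuousOn_finset_sum
      intro i _
      apply ContinuousOn.div continuousOn_const
        (continuousOn_const.sub continuousOn_id)
      intro x hx
      have : x < L := lt_of_le_of_lt hx.2 hbL
      exact sub_ne_zero.mpr (hlt x this i).ne'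
  -- IVT gives a root μ₀ of g in [0, b]
  have hmem : (0 : ℝ) ∈ Set.Icc (g 0) (g b) := ⟨by rw [hg0]; linarith, le_of_lt hgb⟩
  obtain ⟨μ₀, hμ₀mem, hgμ₀⟩ := intermediate_value_Icc hb0 hcont hmem
  have hμ₀L : μ₀ < L := lt_of_le_of_lt hμ₀mem.2 hbL
  have hpμ₀ : pPoly m lam q q0 μ₀ = 0 := (hroot_iff μ₀ hμ₀L).mpr hgμ₀
  have huniq : ∀ y : ℝ, y ∈ Set.Ico 0 L ∧ pPoly m lam q q0 y = 0 → y = μ₀ := by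
    rintro y ⟨⟨hy0, hyL⟩, hpy⟩
    have hgy : g y = 0 := (hroot_iff y hyL).mp hpy
    rcases lt_trichotomy y μ₀ with h | h | h
    · exact absurd (hmono y μ₀ hyL hμ₀L h) (by rw [hgy, hgμ₀]; exact lt_irrefl 0)
    · exact h
    · exact absurd (hmono μ₀ y hμ₀L hyL h) (by rw [hgy, hgμ₀]; exact lt_irrefl 0)
  refine ⟨lt_of_le_of_lt (hsmallest μ₀ hpμ₀) hμ₀L, ⟨μ₀, ⟨⟨hμ₀mem.1, hμ₀L⟩, hpμ₀⟩, huniq⟩⟩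
end
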